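/- Let R be a Noetherian local ring with maximal ideal m, and I an R-ideal of analytic spread ℓ. Let f_1, …, f_{ℓ+s} be elements of I (s a positive integer), set a = (f_1, …, f_{ℓ−1}) and K = (f_1, …, f_{ℓ+s}), and let φ: F(K) → F(I) be the natural map of special fiber rings. Then I^n = (f_1, …, f_{ℓ−1})·I^{n−1} + (f_ℓ, …, f_{ℓ+s})^n for all n ≫ 0 if and only if coker(φ) is a finitely generated module over F(a) (acting through the natural maps F(a) → F(K) → F(I)). -/

import Mathlib

open IsLocalRing Polynomial

section CoreDefs

universe u v

variable {R : Type*} [CommRing R]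

/-- `J` is a reduction of `I`: `J ⊆ I` and `I^(r+1) = J·I^r` for some `r ≥ 0`. -/
def IsReduction (J I : Ideal R) : Prop :=
  J ≤ I ∧ ∃ r : ℕ, I ^ (r + 1) = J * I ^ r

/-- The core of an ideal: the intersection of all of its reductions. -/
def coreIdeal (I : Ideal R) : Ideal R :=
  sInf {J : Ideal R | IsReduction J I}

/-- A minimal reduction is a reduction minimal with respect to inclusion. -/
def IsMinimalReduction (J I : Ideal R) : Prop :=
  IsReduction J I ∧ ∀ J' : Ideal R, IsReduction J' I → J' ≤ J → J' = J

/-- The reduction number `r_J(I)`: the least `r` with `I^(r+1) = J·I^r`. -/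
noncomputable def reductionNumber (J I : Ideal R) : ℕ :=
  sInf {r : ℕ | I ^ (r + 1) = J * I ^ r}

/-- The height of an ideal: the infimum of the heights of the primes containing it. -/
noncomputable def idealHeight (I : Ideal R) : ℕ∞ :=
  ⨅ (p : PrimeSpectrum R) (_ : I ≤ p.asIdeal), Order.height p

/-- The minimal number of generators of an ideal. -/
noncomputable def muGen (I : Ideal R) : ℕ∞ :=
  sInf {n : ℕ∞ | ∃ s : Finset R, (s.card : ℕ∞) = n ∧ Ideal.span (s : Set R) = I}

/-- The condition `G_ℓ` on an ideal `I`. -/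
def HasGCondition (I : Ideal R) (ℓ : ℕ) : Prop :=
  ∀ (p : Ideal R) [p.IsPrime], I ≤ p →
    ringKrullDim (Localization.AtPrime p) < (ℓ : WithBot ℕ∞) →
    (muGen (I.map (algebraMap R (Localization.AtPrime p))) : WithBot ℕ∞) ≤
      ringKrullDim (Localization.AtPrime p)

/-- `depth M ≥ n` for a module `M` over a local ring `R`: there is an `M`-regular
sequence of length `n` inside the maximal ideal. -/
def HasDepthGE (R : Type u) [CommRing R] [IsLocalRing R] (M : Type v) [AddCommGroup M]
    [Module R M] (n : ℕ) : Prop :=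
  ∃ rs : List R, rs.length = n ∧ (∀ x ∈ rs, x ∈ maximalIdeal R) ∧
    RingTheory.Sequence.IsRegular M rs

/-- A (local) Cohen–Macaulay ring: a local ring possessing a regular sequence of
nonunits whose length is the Krull dimension. -/
def IsCMLocalRing (S : Type u) [CommRing S] : Prop :=
  IsLocalRing S ∧ ∃ rs : List S, (∀ x ∈ rs, ¬IsUnit x) ∧
    RingTheory.Sequence.IsRegular S rs ∧ ((rs.length : ℕ∞) : WithBot ℕ∞) = ringKrullDim S

/-- A Cohen–Macaulay ring: all localizations at maximal ideals are local CM rings. -/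
def IsCMRing (S : Type u) [CommRing S] : Prop :=
  ∀ (p : Ideal S) [p.IsMaximal], IsCMLocalRing (Localization.AtPrime p)

/-- A (local) Gorenstein ring: a CM local ring such that, after factoring out a maximal
regular sequence, the socle (the annihilator of the maximal ideal, i.e. of the ideal of
nonunits) is a nonzero principal ideal. -/
def IsGorensteinLocalRing (S : Type u) [CommRing S] : Prop :=
  IsLocalRing S ∧ ∃ rs : List S, (∀ x ∈ rs, ¬IsUnit x) ∧
    RingTheory.Sequence.IsRegular S rs ∧ ((rs.length : ℕ∞) : WithBot ℕ∞) = ringKrullDim S ∧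
    ∃ w : S ⧸ Ideal.span {x : S | x ∈ rs},
      Submodule.colon (⊥ : Ideal (S ⧸ Ideal.span {x : S | x ∈ rs}))
          (Ideal.span {u : S ⧸ Ideal.span {x : S | x ∈ rs} | ¬IsUnit u}) =
        Ideal.span {w} ∧ w ≠ 0

/-- A Gorenstein ring: all localizations at maximal ideals are local Gorenstein rings. -/
def IsGorensteinRing (S : Type u) [CommRing S] : Prop :=
  ∀ (p : Ideal S) [p.IsMaximal], IsGorensteinLocalRing (Localization.AtPrime p)

/-- A regular local ring: Noetherian local with `μ(max ideal) = dim`. -/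
def IsRegularLocalRing' (S : Type u) [CommRing S] : Prop :=
  IsLocalRing S ∧ IsNoetherianRing S ∧
    ((muGen (Ideal.span {u : S | ¬IsUnit u}) : ℕ∞) : WithBot ℕ∞) = ringKrullDim S

/-- Serre's condition `R₁`: the localization at every prime of height at most one
is a regular local ring. -/
def SerreR1 (S : Type u) [CommRing S] : Prop :=
  ∀ (p : Ideal S) [p.IsPrime], idealHeight p ≤ 1 →
    IsRegularLocalRing' (Localization.AtPrime p)

end CoreDefs



section FiberDefs

variable {R : Type*} [CommRing R]

theorem reesAlgebra_mono {K I : Ideal R} (h : K ≤ I) : reesAlgebra K ≤ reesAlgebra I := by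
  intro p hp
  rw [mem_reesAlgebra_iff] at *
  exact fun i => pow_le_pow_left' h i (hp i)

/-- The special fiber ring of `I` relative to the ideal `m` (for `m` the maximal ideal of a
local ring this is `F(I) = ⊕ₙ Iⁿ/mIⁿ`, realized as `R[It] ⊗ R/m`). -/
abbrev fiberRingAt (m I : Ideal R) : Type _ :=
  reesAlgebra I ⧸ (m.map (algebraMap R (reesAlgebra I)))

noncomputable instance (m I : Ideal R) : CommRing (fiberRingAt m I) :=
  Ideal.Quotient.commRing _

/-- The analytic spread `ℓ(I) = dim F(I)`. -/
noncomputable def analyticSpreadAt (m I : Ideal R) : WithBot ℕ∞ :=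
  ringKrullDim (fiberRingAt m I)

/-- The analytic spread of an ideal in a local ring. -/
noncomputable def analyticSpread (R : Type*) [CommRing R] [IsLocalRing R] (I : Ideal R) :
    WithBot ℕ∞ :=
  analyticSpreadAt (maximalIdeal R) I

/-- The natural map of special fiber rings `F(K) → F(I)` induced by an inclusion `K ⊆ I`. -/
noncomputable def fiberMapAt (m : Ideal R) {K I : Ideal R} (h : K ≤ I) :
    fiberRingAt m K →+* fiberRingAt m I :=
  Ideal.quotientMap (m.map (algebraMap R (reesAlgebra I)))
    (Subalgebra.inclusion (reesAlgebra_mono h)).toRingHom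
    (by
      rw [Ideal.map_le_iff_le_comap]
      intro x hx
      simp only [Ideal.mem_comap]
      have h1 : (Subalgebra.inclusion (reesAlgebra_mono h)).toRingHom
          ((algebraMap R (reesAlgebra K)) x) = algebraMap R (reesAlgebra I) x := rfl
      rw [h1]
      exact Ideal.mem_map_of_mem _ hx)

/-- `coker(g)` is a finitely generated module over `A`, where `A` acts via `f`.
(Here `g : B →+* C` and `f : A →+* C` is the composite `A → B → C`.) -/
def CokerFG {A B C : Type*} [CommRing A] [CommRing B] [CommRing C]
    (f : A →+* C) (g : B →+* C) : Prop :=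
  letI := f.toModule
  Module.Finite A (C ⧸ Submodule.span A (Set.range g))

/-- The dimension of `coker(g)` as a module over `A` (acting via `f`),
i.e. `dim A/ann_A(coker g)`. -/
noncomputable def cokerDim {A B C : Type*} [CommRing A] [CommRing B] [CommRing C]
    (f : A →+* C) (g : B →+* C) : WithBot ℕ∞ :=
  letI := f.toModule
  ringKrullDim (A ⧸ Module.annihilator A (C ⧸ Submodule.span A (Set.range g)))

theorem rees_map_mem {I c : Ideal R} {p : R[X]} (hp : p ∈ reesAlgebra I) :
    p.map (Ideal.Quotient.mk c) ∈ reesAlgebra (I.map (Ideal.Quotient.mk c)) := by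
  rw [mem_reesAlgebra_iff] at *
  intro i
  rw [Polynomial.coeff_map, ← Ideal.map_pow]
  exact Ideal.mem_map_of_mem _ (hp i)

/-- The map `R[It] → R̄[Ītt]` induced by the quotient `R → R̄ = R/c`. -/
noncomputable def reesQuotMap (I c : Ideal R) :
    reesAlgebra I →+* reesAlgebra (I.map (Ideal.Quotient.mk c)) :=
  (Polynomial.mapRingHom (Ideal.Quotient.mk c)).restrict (reesAlgebra I) _
    (fun _ hx => rees_map_mem hx)

/-- The natural map `F(I) → F(Ī)` of special fiber rings induced by `R → R̄ = R/c`. -/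
noncomputable def fiberPushMap (m I c : Ideal R) :
    fiberRingAt m I →+*
      fiberRingAt ((m.map (Ideal.Quotient.mk c))) (I.map (Ideal.Quotient.mk c)) :=
  Ideal.quotientMap _ (reesQuotMap I c)
    (by
      rw [Ideal.map_le_iff_le_comap]
      intro x hx
      simp only [Ideal.mem_comap]
      have h1 : reesQuotMap I c (algebraMap R (reesAlgebra I) x) =
          algebraMap _ _ (Ideal.Quotient.mk c x) := by
        apply Subtype.ext
        show (Polynomial.C x : R[X]).map (Ideal.Quotient.mk c) = Polynomial.C _
        simp
      rw [h1]
      exact Ideal.mem_map_of_mem _ (Ideal.mem_map_of_mem _ hx))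

/-- The degree-one element `x* ∈ [F(I)]₁` determined by `x ∈ I`. -/
noncomputable def xstar (m I : Ideal R) (x : R) (hx : x ∈ I) : fiberRingAt m I :=
  Ideal.Quotient.mk _ ⟨Polynomial.monomial 1 x, reesAlgebra.monomial_mem.mpr (by simpa using hx)⟩

/-- The natural map `F(I)/x*F(I) → F(Ī)`, where `Ī` is the image of `I` in `R̄ = R/(x)`. -/
noncomputable def fiberCollapseMap (m I : Ideal R) (x : R) (hx : x ∈ I) :
    (fiberRingAt m I ⧸ Ideal.span {xstar m I x hx}) →+*
      fiberRingAt (m.map (Ideal.Quotient.mk (Ideal.span {x})))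
        (I.map (Ideal.Quotient.mk (Ideal.span {x}))) :=
  Ideal.Quotient.lift _ (fiberPushMap m I (Ideal.span {x}))
    (by
      intro a ha
      have h2 : Ideal.span {xstar m I x hx} ≤
          RingHom.ker (fiberPushMap m I (Ideal.span {x})) := by
        rw [Ideal.span_le, Set.singleton_subset_iff, SetLike.mem_coe, RingHom.mem_ker,
          xstar, fiberPushMap, Ideal.quotientMap_mk]
        have hval : ∀ q : reesAlgebra I, (q : R[X]) = Polynomial.monomial 1 x →
            reesQuotMap I (Ideal.span {x}) q = 0 := by
          intro q hq
          apply Subtype.ext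
          show Polynomial.map (Ideal.Quotient.mk (Ideal.span {x})) (q : R[X]) = 0
          rw [hq, Polynomial.map_monomial]
          have hx0 : Ideal.Quotient.mk (Ideal.span {x}) x = 0 := by
            rw [Ideal.Quotient.eq_zero_iff_mem]
            exact Ideal.mem_span_singleton_self x
          rw [hx0, Polynomial.monomial_zero_right]
        rw [hval _ rfl, map_zero]
      exact h2 ha)

end FiberDefs

section MyAux
variable {R : Type*} [CommRing R]

theorem coeff_mem_of_mem_fiberKer (m I : Ideal R) (q : reesAlgebra I)
    (hq : q ∈ Ideal.map (algebraMap R (reesAlgebra I)) m) (d : ℕ) :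
    (q : R[X]).coeff d ∈ m * I ^ d := by
  rw [Ideal.map] at hq
  induction hq using Submodule.span_induction generalizing d with
  | mem x hx =>
    obtain ⟨r, hr, rfl⟩ := hx
    show (Polynomial.C r).coeff d ∈ m * I ^ d
    rw [coeff_C]
    split
    · subst ‹d = 0›
      simpa using Ideal.mul_mem_mul hr (show (1:R) ∈ I ^ 0 by simp)
    · exact zero_mem _
  | zero => simp
  | add x y _ _ hx hy =>
    rw [Subalgebra.coe_add, coeff_add]
    exact Submodule.add_mem _ (hx d) (hy d)
  | smul c x hxmem hx =>
    rw [smul_eq_mul, Subalgebra.coe_mul, coeff_mul]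
    refine Submodule.sum_mem _ fun p hp => ?_
    rw [Finset.HasAntidiagonal.mem_antidiagonal] at hp
    have h1 : (c : R[X]).coeff p.1 ∈ I ^ p.1 := c.2 p.1
    have h2 := hx p.2
    have he : I ^ p.1 * (m * I ^ p.2) = m * I ^ d := by
      rw [← hp, pow_add]; ring
    rw [← he]
    exact Ideal.mul_mem_mul h1 h2

open Classical in
/-- monomial as element of the Rees algebra (junk value `0` if `y ∉ I^n`). -/
noncomputable def rmon (I : Ideal R) (n : ℕ) (y : R) : reesAlgebra I :=
  if h : y ∈ I ^ n then ⟨Polynomial.monomial n y, reesAlgebra.monomial_mem.mpr h⟩ else 0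

theorem rmon_coe {I : Ideal R} {n : ℕ} {y : R} (h : y ∈ I ^ n) :
    ((rmon I n y : reesAlgebra I) : R[X]) = Polynomial.monomial n y := by
  rw [rmon, dif_pos h]

theorem rmon_add {I : Ideal R} {n : ℕ} {y z : R} (hy : y ∈ I ^ n) (hz : z ∈ I ^ n) :
    rmon I n (y + z) = rmon I n y + rmon I n z := by
  apply Subtype.ext
  rw [Subalgebra.coe_add, rmon_coe hy, rmon_coe hz, rmon_coe (Ideal.add_mem _ hy hz),
    map_add]

theorem rmon_zero (I : Ideal R) (n : ℕ) : rmon I n 0 = 0 := by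
  apply Subtype.ext
  rw [rmon_coe (zero_mem _)]
  simp

/-- `(a+b)^(n+1) ≤ a I^n + b^(n+1)` when `a, b ≤ I`. -/
theorem sup_pow_le (a b I : Ideal R) (haI : a ≤ I) (hbI : b ≤ I) (n : ℕ) :
    (a ⊔ b) ^ (n + 1) ≤ a * I ^ n + b ^ (n + 1) := by
  rw [← Ideal.add_eq_sup]
  induction n with
  | zero => simp [Ideal.add_eq_sup]
  | succ n ih =>
    have habI : a + b ≤ I := by rw [Ideal.add_eq_sup]; exact sup_le haI hbI
    have h1 : a * (a + b) ^ (n+1) ≤ a * I ^ (n+1) := by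
      gcongr
    have h2 : b * (a + b) ^ (n+1) ≤ a * I ^ (n+1) + b ^ (n+2) := calc
      b * (a + b) ^ (n+1) ≤ b * (a * I ^ n + b ^ (n+1)) := by gcongr
      _ = a * (b * I ^ n) + b ^ (n+2) := by ring
      _ ≤ a * (I * I ^ n) + b ^ (n+2) := by gcongr
      _ = a * I ^ (n+1) + b ^ (n+2) := by ring
    calc (a + b) ^ (n+2) = a * (a + b) ^ (n+1) + b * (a + b) ^ (n+1) := by ring
      _ ≤ (a * I ^ (n+1) + b ^ (n+2)) + (a * I ^ (n+1) + b ^ (n+2)) :=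
          add_le_add (h1.trans (by rw [Ideal.add_eq_sup]; exact le_sup_left)) h2
      _ = a * I ^ (n+1) + b ^ (n+2) := by
          rw [Ideal.add_eq_sup, Ideal.add_eq_sup, sup_idem]


theorem fiberMapAt_mk (m : Ideal R) {K I : Ideal R} (h : K ≤ I) (q : reesAlgebra K) :
    fiberMapAt m h (Ideal.Quotient.mk _ q) =
      Ideal.Quotient.mk _ (⟨(q : R[X]), reesAlgebra_mono h q.2⟩ : reesAlgebra I) := by
  rw [fiberMapAt, Ideal.quotientMap_mk]
  rfl

set_option maxHeartbeats 1000000 in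
set_option synthInstance.maxHeartbeats 200000 in
theorem forward_dir [IsNoetherianRing R] [IsLocalRing R]
    (I a K b : Ideal R) (haI : a ≤ I) (hKI : K ≤ I) (hbK : b ≤ K)
    (N : ℕ) (hpow : ∀ n : ℕ, N ≤ n → I ^ (n + 1) = a * I ^ n + b ^ (n + 1)) :
    CokerFG (fiberMapAt (IsLocalRing.maximalIdeal R) haI)
      (fiberMapAt (IsLocalRing.maximalIdeal R) hKI) := by
  classical
  set m := IsLocalRing.maximalIdeal R
  letI := (fiberMapAt m haI).toModule
  set f := fiberMapAt m haI with hf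
  set g := fiberMapAt m hKI with hg
  set mkI : reesAlgebra I →+* fiberRingAt m I :=
    Ideal.Quotient.mk (Ideal.map (algebraMap R (reesAlgebra I)) m) with hmkI
  have hsmul : ∀ (α : fiberRingAt m a) (x : fiberRingAt m I), α • x = f α * x :=
    fun _ _ => rfl
  -- generators of the powers of I
  have hfgn : ∀ n : ℕ, (I ^ n).FG := fun n => IsNoetherian.noetherian _
  choose G hG using hfgn
  set T : Set (fiberRingAt m I) :=
    ⋃ n ∈ Finset.range (N + 1), (fun y => mkI (rmon I n y)) '' (G n : Set R) with hT
  have hTfin : T.Finite :=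
    Set.Finite.biUnion (Finset.range (N + 1)).finite_toSet
      (fun n _ => (G n).finite_toSet.image _)
  have hmulmem : ∀ (n' : ℕ) (y : R), y ∈ a * I ^ n' → y ∈ I ^ (n' + 1) := by
    intro n' y hy
    refine Ideal.mul_le.mpr (fun c hc w hw => ?_) hy
    rw [pow_succ']
    exact Ideal.mul_mem_mul (haI hc) hw
  -- the key claim
  have key : ∀ n : ℕ, ∀ x ∈ I ^ n,
      mkI (rmon I n x) ∈ Submodule.span (fiberRingAt m a) (Set.range g ∪ T) := by
    intro n
    induction n using Nat.strong_induction_on with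
    | _ n ih =>
      by_cases hn : n ≤ N
      · -- low degrees: use the chosen generators
        intro x hx
        rw [← hG n] at hx
        induction hx using Submodule.span_induction with
        | mem y hy =>
          refine Submodule.subset_span (Or.inr ?_)
          refine Set.mem_biUnion (?_ : n ∈ Finset.range (N + 1)) ⟨y, hy, rfl⟩
          rw [Finset.mem_range]
          omega
        | zero => rw [rmon_zero, map_zero]; exact zero_mem _
        | add y z hym hzm hy hz =>
          have hym' : y ∈ I ^ n := by rw [← hG n]; exact hym
          have hzm' : z ∈ I ^ n := by rw [← hG n]; exact hzm
          rw [rmon_add hym' hzm', RingHom.map_add]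
          exact Submodule.add_mem _ hy hz
        | smul r y hym hy =>
          have hym' : y ∈ I ^ n := by rw [← hG n]; exact hym
          rw [smul_eq_mul]
          set α : fiberRingAt m a :=
            Ideal.Quotient.mk _ (algebraMap R (reesAlgebra a) r) with hα
          have hfα : f α = mkI ((algebraMap R (reesAlgebra I)) r) := by
            rw [hα, hf, fiberMapAt_mk]
            rfl
          have hry : mkI (rmon I n (r * y)) = α • mkI (rmon I n y) := by
            rw [hsmul, hfα, ← RingHom.map_mul]
            congr 1
            apply Subtype.ext
            rw [rmon_coe (Ideal.mul_mem_left _ r hym'), Subalgebra.coe_mul,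
              rmon_coe hym']
            show _ = Polynomial.C r * _
            rw [Polynomial.C_mul_monomial]
          rw [hry]
          exact Submodule.smul_mem _ _ hy
      · -- high degrees: use the reduction relation
        push_neg at hn
        obtain ⟨n', rfl⟩ : ∃ n', n = n' + 1 := ⟨n - 1, by omega⟩
        intro x hx
        have hx' : x ∈ a * I ^ n' + K ^ (n' + 1) := by
          rw [hpow n' (by omega)] at hx
          exact add_le_add le_rfl (pow_le_pow_left' hbK _) hx
        rw [Ideal.add_eq_sup] at hx'
        obtain ⟨y, hy, z, hz, rfl⟩ := Submodule.mem_sup.mp hx'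
        have hyI : y ∈ I ^ (n' + 1) := hmulmem n' y hy
        have hzI : z ∈ I ^ (n' + 1) := pow_le_pow_left' hKI _ hz
        rw [rmon_add hyI hzI, RingHom.map_add]
        refine Submodule.add_mem _ ?_ ?_
        · -- y ∈ a * I^n'
          clear hx hx' hyI
          induction hy using Submodule.mul_induction_on' with
          | mem_mul_mem c hc w hw =>
            set α : fiberRingAt m a := Ideal.Quotient.mk _ (rmon a 1 c) with hα
            have hc1 : c ∈ a ^ 1 := by rwa [pow_one]
            have hcw : c * w ∈ I ^ (n' + 1) := by
              rw [pow_succ']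
              exact Ideal.mul_mem_mul (haI hc) hw
            have heq : mkI (rmon I (n' + 1) (c * w)) = α • mkI (rmon I n' w) := by
              rw [hsmul, hα, hf, fiberMapAt_mk, hmkI, ← RingHom.map_mul]
              congr 1
              apply Subtype.ext
              rw [rmon_coe hcw, Subalgebra.coe_mul, rmon_coe hw]
              show _ = ((rmon a 1 c : reesAlgebra a) : R[X]) * _
              rw [rmon_coe hc1, Polynomial.monomial_mul_monomial, add_comm 1 n']
            rw [heq]
            exact Submodule.smul_mem _ _ (ih n' (by omega) w hw)
          | add y1 hy1 y2 hy2 h1 h2 =>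
            rw [rmon_add (hmulmem n' y1 hy1) (hmulmem n' y2 hy2), RingHom.map_add]
            exact Submodule.add_mem _ h1 h2
        · -- z ∈ K^{n'+1}
          have hzg : mkI (rmon I (n' + 1) z) =
              g (Ideal.Quotient.mk _ (rmon K (n' + 1) z)) := by
            rw [hg, fiberMapAt_mk, hmkI]
            congr 1
            apply Subtype.ext
            rw [rmon_coe hzI]
            show _ = ((rmon K (n' + 1) z : reesAlgebra K) : R[X])
            rw [rmon_coe hz]
          rw [hzg]
          exact Submodule.subset_span (Or.inl ⟨_, rfl⟩)
  -- every element of F(I) lies in the span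
  have htop : Submodule.span (fiberRingAt m a) (Set.range g ∪ T) = ⊤ := by
    rw [eq_top_iff]
    rintro ξ -
    obtain ⟨q, rfl⟩ := Ideal.Quotient.mk_surjective ξ
    have hq : q = ∑ i ∈ (q : R[X]).support, rmon I i ((q : R[X]).coeff i) := by
      apply Subtype.ext
      rw [AddSubmonoidClass.coe_finset_sum]
      conv_lhs => rw [(q : R[X]).as_sum_support]
      exact Finset.sum_congr rfl (fun i _ => (rmon_coe (q.2 i)).symm)
    show mkI q ∈ _
    rw [hq, map_sum]
    exact Submodule.sum_mem _ (fun i _ => key i _ (q.2 i))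
  -- conclude
  show Module.Finite (fiberRingAt m a)
    (fiberRingAt m I ⧸ Submodule.span (fiberRingAt m a) (Set.range g))
  rw [Module.finite_def, Submodule.fg_def]
  set S := Submodule.span (fiberRingAt m a) (Set.range g) with hS
  refine ⟨S.mkQ '' T, hTfin.image _, ?_⟩
  have h1 : Submodule.span (fiberRingAt m a) (S.mkQ '' (Set.range g ∪ T)) = ⊤ := by
    rw [← Submodule.map_span, htop, Submodule.map_top, Submodule.range_mkQ]
  rw [Set.image_union, Submodule.span_union] at h1
  have h2 : Submodule.span (fiberRingAt m a) (S.mkQ '' Set.range g) = ⊥ := by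
    rw [Submodule.span_eq_bot]
    rintro x ⟨v, ⟨w, rfl⟩, rfl⟩
    rw [← LinearMap.mem_ker, Submodule.ker_mkQ]
    exact Submodule.subset_span ⟨w, rfl⟩
  rw [h2, bot_sup_eq] at h1
  exact h1

set_option maxHeartbeats 1000000 in
set_option synthInstance.maxHeartbeats 200000 in
theorem backward_dir [IsNoetherianRing R] [IsLocalRing R]
    (I a K : Ideal R) (haI : a ≤ I) (hKI : K ≤ I)
    (hfin : CokerFG (fiberMapAt (IsLocalRing.maximalIdeal R) haI)
      (fiberMapAt (IsLocalRing.maximalIdeal R) hKI)) :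
    ∃ N : ℕ, ∀ n : ℕ, N ≤ n → I ^ (n + 1) = a * I ^ n + K ^ (n + 1) := by
  classical
  set m := IsLocalRing.maximalIdeal R
  letI := (fiberMapAt m haI).toModule
  set f := fiberMapAt m haI with hf
  set g := fiberMapAt m hKI with hg
  set mkI : reesAlgebra I →+* fiberRingAt m I :=
    Ideal.Quotient.mk (Ideal.map (algebraMap R (reesAlgebra I)) m) with hmkI
  have hsmul : ∀ (α : fiberRingAt m a) (x : fiberRingAt m I), α • x = f α * x :=
    fun _ _ => rfl
  set S := Submodule.span (fiberRingAt m a) (Set.range g) with hS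
  have hfin2 : Module.Finite (fiberRingAt m a) (fiberRingAt m I ⧸ S) := hfin
  obtain ⟨Sg, hSg⟩ := Module.finite_def.mp hfin2
  -- lift the generators to the Rees algebra
  have hsurj : Function.Surjective (fun q : reesAlgebra I => S.mkQ (mkI q)) :=
    (Submodule.mkQ_surjective S).comp (Ideal.Quotient.mk_surjective)
  choose lift hlift using hsurj
  set N := Sg.sup (fun ξ => ((lift ξ : reesAlgebra I) : R[X]).natDegree) with hN
  set V : Set (fiberRingAt m I) := (fun ξ => mkI (lift ξ)) '' (Sg : Set _) with hV
  -- the span of range g ∪ V is everything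
  have hVtop : Submodule.span (fiberRingAt m a) (Set.range g ∪ V) = ⊤ := by
    rw [Submodule.span_union]
    have h1 : Submodule.map S.mkQ (Submodule.span (fiberRingAt m a) V) = ⊤ := by
      rw [Submodule.map_span]
      have himg : S.mkQ '' V = Sg := by
        rw [hV, ← Set.image_comp]
        ext ξ
        constructor
        · rintro ⟨η, hη, rfl⟩
          show S.mkQ (mkI (lift η)) ∈ _
          rw [show S.mkQ (mkI (lift η)) = η from hlift η]
          exact hη
        · intro hξ
          exact ⟨ξ, hξ, hlift ξ⟩
      rw [himg, hSg]
    have := congrArg (Submodule.comap S.mkQ) h1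
    rw [Submodule.comap_map_eq, Submodule.ker_mkQ, Submodule.comap_top] at this
    rw [sup_comm] at this
    rw [← hS]
    exact this
  refine ⟨N, fun n hn => ?_⟩
  -- main containment
  have hle : I ^ (n + 1) ≤ a * I ^ n + K ^ (n + 1) := by
    -- step 1: modulo m I^{n+1}
    have hmem : ∀ x ∈ I ^ (n + 1),
        x ∈ a * I ^ n + K ^ (n + 1) + m * I ^ (n + 1) := by
      intro x hx
      -- the class of the monomial lies in the span
      have hx1 : mkI (rmon I (n + 1) x) ∈
          Submodule.span (fiberRingAt m a) (Set.range g ∪ V) := by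
        rw [hVtop]; trivial
      -- coefficient extraction
      have hco : ∀ ξ ∈ Submodule.span (fiberRingAt m a) (Set.range g ∪ V),
          ∃ q : reesAlgebra I, mkI q = ξ ∧
            (q : R[X]).coeff (n + 1) ∈ a * I ^ n + K ^ (n + 1) := by
        intro ξ hξ
        induction hξ using Submodule.span_induction with
        | mem v hv =>
          rcases hv with ⟨η, rfl⟩ | ⟨ξ₀, hξ₀, rfl⟩
          · obtain ⟨q0, rfl⟩ := Ideal.Quotient.mk_surjective η
            refine ⟨⟨(q0 : R[X]), reesAlgebra_mono hKI q0.2⟩, ?_, ?_⟩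
            · rw [hg, fiberMapAt_mk]
            · have : (q0 : R[X]).coeff (n + 1) ∈ K ^ (n + 1) := q0.2 (n + 1)
              rw [Ideal.add_eq_sup]
              exact Submodule.mem_sup_right this
          · refine ⟨lift ξ₀, rfl, ?_⟩
            have hdeg : ((lift ξ₀ : reesAlgebra I) : R[X]).natDegree < n + 1 := by
              have h1 : ((lift ξ₀ : reesAlgebra I) : R[X]).natDegree ≤ N :=
                Finset.le_sup (f := fun ξ => ((lift ξ : reesAlgebra I) : R[X]).natDegree) hξ₀
              omega
            rw [Polynomial.coeff_eq_zero_of_natDegree_lt hdeg]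
            exact zero_mem _
        | zero => exact ⟨0, map_zero _, by simp⟩
        | add ξ₁ ξ₂ h₁ h₂ ih₁ ih₂ =>
          obtain ⟨q1, hq1, hc1⟩ := ih₁
          obtain ⟨q2, hq2, hc2⟩ := ih₂
          refine ⟨q1 + q2, by rw [RingHom.map_add, hq1, hq2], ?_⟩
          rw [Subalgebra.coe_add, Polynomial.coeff_add]
          exact add_mem hc1 hc2
        | smul α ξ hξmem ihξ =>
          obtain ⟨q, hq, hc⟩ := ihξ
          obtain ⟨pa, rfl⟩ := Ideal.Quotient.mk_surjective α
          refine ⟨⟨(pa : R[X]), reesAlgebra_mono haI pa.2⟩ * q, ?_, ?_⟩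
          · rw [RingHom.map_mul, hq, hsmul, hf, fiberMapAt_mk]
          · rw [Subalgebra.coe_mul, Polynomial.coeff_mul]
            refine Submodule.sum_mem _ fun p hp => ?_
            rw [Finset.HasAntidiagonal.mem_antidiagonal] at hp
            rcases Nat.eq_zero_or_pos p.1 with hp1 | hp1
            · -- constant term times coefficient of q
              have hp2 : p.2 = n + 1 := by omega
              rw [hp2]
              exact Ideal.mul_mem_left _ _ hc
            · -- positive degree part lands in a * I^n
              have h1 : ((pa : R[X])).coeff p.1 ∈ a ^ p.1 := pa.2 p.1
              have h2 : ((q : R[X])).coeff p.2 ∈ I ^ p.2 := q.2 p.2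
              have hprod : ((pa : R[X])).coeff p.1 * ((q : R[X])).coeff p.2 ∈
                  a * I ^ n := by
                have ha1 : a ^ p.1 ≤ a * I ^ (p.1 - 1) := by
                  calc a ^ p.1 = a * a ^ (p.1 - 1) := by
                        rw [← pow_succ']
                        congr 1
                        omega
                    _ ≤ a * I ^ (p.1 - 1) := by
                        gcongr
                have : a * I ^ (p.1 - 1) * I ^ p.2 = a * I ^ n := by
                  rw [mul_assoc, ← pow_add]
                  congr 2
                  omega
                rw [← this]
                exact Ideal.mul_mem_mul (ha1 h1) h2
              rw [Ideal.add_eq_sup]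
              exact Submodule.mem_sup_left hprod
      obtain ⟨q, hq, hcoef⟩ := hco _ hx1
      -- compare q with the monomial
      have hdiff : rmon I (n + 1) x - q ∈
          Ideal.map (algebraMap R (reesAlgebra I)) m := by
        rw [← Ideal.Quotient.eq_zero_iff_mem, map_sub]
        rw [hmkI] at hq
        rw [hq]
        simp
      have hdco : ((rmon I (n + 1) x - q : reesAlgebra I) : R[X]).coeff (n + 1) ∈
          m * I ^ (n + 1) := coeff_mem_of_mem_fiberKer m I _ hdiff (n + 1)
      have hxeq : x = (q : R[X]).coeff (n + 1) +
          ((rmon I (n + 1) x - q : reesAlgebra I) : R[X]).coeff (n + 1) := by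
        have : ((rmon I (n + 1) x - q : reesAlgebra I) : R[X]) =
            Polynomial.monomial (n + 1) x - (q : R[X]) := by
          rw [AddSubgroupClass.coe_sub, rmon_coe hx]
        rw [this, Polynomial.coeff_sub, Polynomial.coeff_monomial]
        simp
      rw [hxeq, Ideal.add_eq_sup, Ideal.add_eq_sup]
      exact Submodule.add_mem _ (Submodule.mem_sup_left (by rw [← Ideal.add_eq_sup]; exact hcoef)) (Submodule.mem_sup_right hdco)
    -- step 2: Nakayama
    have hnak : I ^ (n + 1) ≤ (a * I ^ n + K ^ (n + 1)) ⊔ m • (I ^ (n + 1)) := by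
      intro x hx
      have := hmem x hx
      rw [Ideal.add_eq_sup] at this
      rwa [Ideal.smul_eq_mul]
    exact Submodule.le_of_le_smul_of_le_jacobson_bot (IsNoetherian.noetherian _)
      (IsLocalRing.maximalIdeal_le_jacobson ⊥) hnak
  refine le_antisymm hle ?_
  rw [Ideal.add_eq_sup]
  refine sup_le ?_ (pow_le_pow_left' hKI _)
  calc a * I ^ n ≤ I * I ^ n := by gcongr
    _ = I ^ (n + 1) := by rw [← pow_succ']

end MyAux

/-- **Corollary.** Let `R` be a Noetherian local ring, `I` an ideal of analytic spread `ℓ`,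
`f₁, …, f_{ℓ+s}` elements of `I`, `𝔞 = (f₁, …, f_{ℓ−1})`, `K = (f₁, …, f_{ℓ+s})`, and
`φ : F(K) → F(I)` the natural map of special fiber rings. Then
`Iⁿ = (f₁, …, f_{ℓ−1})I^{n−1} + (f_ℓ, …, f_{ℓ+s})ⁿ` for all `n ≫ 0` iff `coker(φ)` is a
finite `F(𝔞)`-module. -/
theorem powers_decomposition_iff_cokernel_finite
    {R : Type*} [CommRing R] [IsNoetherianRing R] [IsLocalRing R]
    (I : Ideal R) (ℓ s : ℕ) (hs : 0 < s)
    (hl : analyticSpread R I = ((ℓ : ℕ∞) : WithBot ℕ∞))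
    (f : Fin (ℓ + s) → R) (hf : ∀ i, f i ∈ I)
    (a K b : Ideal R)
    (ha : a = Ideal.span {y : R | ∃ i : Fin (ℓ + s), (i : ℕ) < ℓ - 1 ∧ y = f i})
    (hb : b = Ideal.span {y : R | ∃ i : Fin (ℓ + s), ℓ - 1 ≤ (i : ℕ) ∧ y = f i})
    (hK : K = Ideal.span (Set.range f))
    (haI : a ≤ I) (hKI : K ≤ I) :
    ((∃ N : ℕ, ∀ n : ℕ, N ≤ n → I ^ (n + 1) = a * I ^ n + b ^ (n + 1)) ↔
      CokerFG (fiberMapAt (IsLocalRing.maximalIdeal R) haI)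
        (fiberMapAt (IsLocalRing.maximalIdeal R) hKI)) := by
  classical
  -- K = a ⊔ b
  have hKab : K = a ⊔ b := by
    rw [hK, ha, hb, ← Ideal.span_union]
    congr 1
    ext y
    constructor
    · rintro ⟨i, rfl⟩
      rcases lt_or_ge (i : ℕ) (ℓ - 1) with h | h
      · exact Or.inl ⟨i, h, rfl⟩
      · exact Or.inr ⟨i, h, rfl⟩
    · rintro (⟨i, _, rfl⟩ | ⟨i, _, rfl⟩) <;> exact ⟨i, rfl⟩
  have haK : a ≤ K := by rw [hKab]; exact le_sup_left
  have hbK : b ≤ K := by rw [hKab]; exact le_sup_right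
  have hbI : b ≤ I := hbK.trans hKI
  constructor
  · rintro ⟨N, hNp⟩
    exact forward_dir I a K b haI hKI hbK N hNp
  · intro h
    obtain ⟨N, hN⟩ := backward_dir I a K haI hKI h
    refine ⟨N, fun n hn => ?_⟩
    have hKn : K ^ (n + 1) ≤ a * I ^ n + b ^ (n + 1) := by
      rw [hKab]
      exact sup_pow_le a b I haI hbI n
    refine le_antisymm ?_ ?_
    · rw [hN n hn, Ideal.add_eq_sup]
      refine sup_le ?_ hKn
      rw [Ideal.add_eq_sup]
      exact le_sup_left
    · rw [Ideal.add_eq_sup]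
      refine sup_le ?_ (pow_le_pow_left' hbI _)
      calc a * I ^ n ≤ I * I ^ n := by gcongr
        _ = I ^ (n + 1) := by rw [← pow_succ']
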